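/- Let A and B be real symmetric positive definite n×n matrices and C an m×n real matrix. Then ‖C B (B A B)^{-1/2}‖ = ‖C A^{-1/2}‖, where ‖·‖ is either the spectral norm or the nuclear norm. -/

import Mathlib

open Matrix

/-- The spectral norm (largest singular value) of a matrix. -/
noncomputable def specNorm {m n : Type*} [Fintype m] [Fintype n] [DecidableEq n]
    (A : Matrix m n ℝ) : ℝ :=
  ‖LinearMap.toContinuousLinearMap (Matrix.toEuclideanLin A)‖

/-- The nuclear (trace) norm of a matrix: the sum of its singular values, i.e. of the
square roots of the eigenvalues of `Aᵀ A`. -/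
noncomputable def nuclearNorm {m n : Type*} [Fintype m] [Fintype n] [DecidableEq n]
    (A : Matrix m n ℝ) : ℝ :=
  ∑ i, Real.sqrt ((Matrix.isHermitian_conjTranspose_mul_self A).eigenvalues i)
open scoped ComplexOrder in
noncomputable def Matrix.PosSemidef.sqrt {n 𝕜 : Type*} [Fintype n] [RCLike 𝕜] [DecidableEq n]
    {A : Matrix n n 𝕜} (hA : A.PosSemidef) : Matrix n n 𝕜 :=
  hA.1.eigenvectorUnitary.1 * diagonal ((↑) ∘ (√·) ∘ hA.1.eigenvalues) *
  (star hA.1.eigenvectorUnitary : Matrix n n 𝕜)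

open scoped MatrixOrder in
lemma Matrix.PosSemidef.sqrt_eq_cfc_sqrt {k : Type*} [Fintype k] [DecidableEq k]
    {S : Matrix k k ℝ} (hS : S.PosSemidef) : hS.sqrt = CFC.sqrt S := by
  rw [CFC.sqrt_eq_cfc, cfc_nnreal_eq_real _ S hS.nonneg, hS.1.cfc_eq]
  simp only [IsHermitian.cfc, Matrix.PosSemidef.sqrt, Unitary.conjStarAlgAut_apply]
  congr 3
  funext i
  simp [Real.coe_toNNReal', max_eq_left (hS.eigenvalues_nonneg i)]

open scoped MatrixOrder in
lemma Matrix.PosSemidef.sqrt_mul_self {k : Type*} [Fintype k] [DecidableEq k]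
    {S : Matrix k k ℝ} (hS : S.PosSemidef) : hS.sqrt * hS.sqrt = S := by
  rw [hS.sqrt_eq_cfc_sqrt]; exact CFC.sqrt_mul_sqrt_self S hS.nonneg

open scoped MatrixOrder in
lemma Matrix.PosSemidef.posSemidef_sqrt {k : Type*} [Fintype k] [DecidableEq k]
    {S : Matrix k k ℝ} (hS : S.PosSemidef) : hS.sqrt.PosSemidef := by
  rw [hS.sqrt_eq_cfc_sqrt]; exact (CFC.sqrt_nonneg S).posSemidef

open scoped MatrixOrder in
lemma Matrix.PosSemidef.eq_sqrt_of_sq_eq {k : Type*} [Fintype k] [DecidableEq k]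
    {B : Matrix k k ℝ} (hB : B.PosSemidef) {A : Matrix k k ℝ} (hA : A.PosSemidef)
    (h : B ^ 2 = A) : B = hA.sqrt := by
  rw [hA.sqrt_eq_cfc_sqrt]; exact (CFC.sqrt_unique (by rw [← pow_two]; exact h) hB.nonneg).symm

open scoped Matrix.Norms.L2Operator

lemma specNorm_eq_norm {m n : Type*} [Fintype m] [Fintype n] [DecidableEq m] [DecidableEq n]
    (A : Matrix m n ℝ) : specNorm A = ‖A‖ := rfl

lemma eigsum_congr {k : Type*} [Fintype k] [DecidableEq k] {S T : Matrix k k ℝ}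
    (hS : S.IsHermitian) (hT : T.IsHermitian) (h : S = T) :
    ∑ i, Real.sqrt (hS.eigenvalues i) = ∑ i, Real.sqrt (hT.eigenvalues i) := by
  subst h; rfl

lemma trace_sqrt_congr {k : Type*} [Fintype k] [DecidableEq k] {S T : Matrix k k ℝ}
    (hS : S.PosSemidef) (hT : T.PosSemidef) (h : S = T) :
    hS.sqrt.trace = hT.sqrt.trace := by
  subst h; rfl

lemma sum_sqrt_eig_eq_trace {k : Type*} [Fintype k] [DecidableEq k] {S : Matrix k k ℝ}
    (hS : S.PosSemidef) :
    ∑ i, Real.sqrt (hS.1.eigenvalues i) = hS.sqrt.trace := by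
  have hV : (star hS.1.eigenvectorUnitary.1) * hS.1.eigenvectorUnitary.1 = 1 := by
    simpa using hS.1.eigenvectorUnitary.2.1
  rw [Matrix.PosSemidef.sqrt, trace_mul_comm, ← Matrix.mul_assoc, hV, Matrix.one_mul,
    trace_diagonal]
  simp

lemma sqrt_conj {k : Type*} [Fintype k] [DecidableEq k] {S U : Matrix k k ℝ}
    (hS : S.PosSemidef) (hU : U * Uᴴ = 1) (hS' : (Uᴴ * S * U).PosSemidef) :
    hS'.sqrt = Uᴴ * hS.sqrt * U := by
  symm
  apply Matrix.PosSemidef.eq_sqrt_of_sq_eq (hS.posSemidef_sqrt.conjTranspose_mul_mul_same U)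
  have h1 : U * (Uᴴ * (hS.sqrt * U)) = hS.sqrt * U := by
    rw [← Matrix.mul_assoc, hU, Matrix.one_mul]
  have h2 : hS.sqrt * (hS.sqrt * U) = S * U := by
    rw [← Matrix.mul_assoc, hS.sqrt_mul_self]
  rw [pow_two]
  simp only [Matrix.mul_assoc, h1, h2]

lemma nuclearNorm_eq_trace {l k : Type*} [Fintype l] [Fintype k] [DecidableEq k]
    (M : Matrix l k ℝ) :
    nuclearNorm M = (posSemidef_conjTranspose_mul_self M).sqrt.trace := by
  rw [nuclearNorm, eigsum_congr (isHermitian_conjTranspose_mul_self M)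
      (posSemidef_conjTranspose_mul_self M).1 (by rw [conjTranspose_eq_transpose_of_trivial]),
    sum_sqrt_eig_eq_trace]

lemma specNorm_eq_of_mul_conjTranspose_eq {l k : Type*} [Fintype l] [Fintype k]
    [DecidableEq l] [DecidableEq k] {M N : Matrix l k ℝ} (h : M * Mᴴ = N * Nᴴ) :
    specNorm M = specNorm N := by
  have key : ∀ P : Matrix l k ℝ, specNorm P * specNorm P = ‖P * Pᴴ‖ := fun P => by
    have h1 := Matrix.l2_opNorm_conjTranspose_mul_self Pᴴ
    rw [conjTranspose_conjTranspose, Matrix.l2_opNorm_conjTranspose] at h1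
    rw [specNorm_eq_norm, h1]
  have h2 : specNorm M * specNorm M = specNorm N * specNorm N := by
    rw [key, key, h]
  have hM : (0:ℝ) ≤ specNorm M := by rw [specNorm_eq_norm]; exact norm_nonneg _
  have hN : (0:ℝ) ≤ specNorm N := by rw [specNorm_eq_norm]; exact norm_nonneg _
  calc specNorm M = Real.sqrt (specNorm M * specNorm M) := (Real.sqrt_mul_self hM).symm
    _ = Real.sqrt (specNorm N * specNorm N) := by rw [h2]
    _ = specNorm N := Real.sqrt_mul_self hN

/-- **Norm switch lemma.**  For real symmetric positive definite `A`, `B` and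
any real matrix `C`, one has `‖C B (B A B)^{-1/2}‖ = ‖C A^{-1/2}‖` in both the spectral and
the nuclear norm.  (The hypothesis `hBAB`, positive definiteness of `B A B`, follows from
those of `A` and `B` and is supplied in order to form the square root.) -/
theorem specNorm_nuclearNorm_switch {m n : ℕ} (A B : Matrix (Fin n) (Fin n) ℝ)
    (C : Matrix (Fin m) (Fin n) ℝ) (hA : A.PosDef) (hB : B.PosDef)
    (hBAB : (B * A * B).PosDef) :
    specNorm (C * B * (hBAB.posSemidef.sqrt)⁻¹) = specNorm (C * (hA.posSemidef.sqrt)⁻¹) ∧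
    nuclearNorm (C * B * (hBAB.posSemidef.sqrt)⁻¹) = nuclearNorm (C * (hA.posSemidef.sqrt)⁻¹) := by
  set S := hBAB.posSemidef.sqrt with hSdef
  set T := hA.posSemidef.sqrt with hTdef
  have hSS : S * S = B * A * B := hBAB.posSemidef.sqrt_mul_self
  have hTT : T * T = A := hA.posSemidef.sqrt_mul_self
  have hAdet : IsUnit A.det := isUnit_iff_ne_zero.mpr hA.det_pos.ne'
  have hBdet : IsUnit B.det := isUnit_iff_ne_zero.mpr hB.det_pos.ne'
  have hBABdet : IsUnit (B * A * B).det := isUnit_iff_ne_zero.mpr hBAB.det_pos.ne'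
  have hSdet : IsUnit S.det := by
    have h : S.det * S.det = (B * A * B).det := by rw [← det_mul, hSS]
    refine isUnit_iff_ne_zero.mpr fun h0 => hBAB.det_pos.ne' ?_
    rw [← h, h0, mul_zero]
  have hTdet : IsUnit T.det := by
    have h : T.det * T.det = A.det := by rw [← det_mul, hTT]
    refine isUnit_iff_ne_zero.mpr fun h0 => hA.det_pos.ne' ?_
    rw [← h, h0, mul_zero]
  have hSh : Sᴴ = S := hBAB.posSemidef.posSemidef_sqrt.1
  have hTh : Tᴴ = T := hA.posSemidef.posSemidef_sqrt.1
  have hSih : (S⁻¹)ᴴ = S⁻¹ := by rw [conjTranspose_nonsing_inv, hSh]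
  have hTih : (T⁻¹)ᴴ = T⁻¹ := by rw [conjTranspose_nonsing_inv, hTh]
  have hBh : Bᴴ = B := hB.1
  have hSS' : S⁻¹ * S⁻¹ = (B * A * B)⁻¹ := by rw [← Matrix.mul_inv_rev, hSS]
  have hTT' : T⁻¹ * T⁻¹ = A⁻¹ := by rw [← Matrix.mul_inv_rev, hTT]
  -- key middle identity
  have hmid : ∀ {l : Type} (X : Matrix (Fin n) l ℝ),
      B * ((B * A * B)⁻¹ * (B * X)) = A⁻¹ * X := fun X => by
    rw [Matrix.mul_inv_rev, Matrix.mul_inv_rev]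
    calc B * (B⁻¹ * (A⁻¹ * B⁻¹) * (B * X))
        = (B * B⁻¹) * (A⁻¹ * ((B⁻¹ * B) * X)) := by simp only [Matrix.mul_assoc]
      _ = A⁻¹ * X := by
          rw [Matrix.mul_nonsing_inv _ hBdet, Matrix.nonsing_inv_mul _ hBdet,
            Matrix.one_mul, Matrix.one_mul]
  -- the two Gram matrices coincide
  have key1 : (C * B * S⁻¹) * (C * B * S⁻¹)ᴴ = C * (A⁻¹ * Cᴴ) := by
    simp only [conjTranspose_mul, hSih, hBh]
    calc C * B * S⁻¹ * (S⁻¹ * (B * Cᴴ))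
        = C * (B * ((S⁻¹ * S⁻¹) * (B * Cᴴ))) := by simp only [Matrix.mul_assoc]
      _ = C * (A⁻¹ * Cᴴ) := by rw [hSS', hmid]
  have key2 : (C * T⁻¹) * (C * T⁻¹)ᴴ = C * (A⁻¹ * Cᴴ) := by
    simp only [conjTranspose_mul, hTih]
    calc C * T⁻¹ * (T⁻¹ * Cᴴ) = C * ((T⁻¹ * T⁻¹) * Cᴴ) := by simp only [Matrix.mul_assoc]
      _ = C * (A⁻¹ * Cᴴ) := by rw [hTT']
  refine ⟨specNorm_eq_of_mul_conjTranspose_eq (key1.trans key2.symm), ?_⟩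
  -- nuclear norm part
  set U := T * B * S⁻¹ with hUdef
  have hUh : Uᴴ = S⁻¹ * (B * T) := by
    simp only [hUdef, conjTranspose_mul, hSih, hBh, hTh, Matrix.mul_assoc]
  have hUU : U * Uᴴ = 1 := by
    rw [hUh, hUdef]
    calc T * B * S⁻¹ * (S⁻¹ * (B * T))
        = T * (B * ((S⁻¹ * S⁻¹) * (B * T))) := by simp only [Matrix.mul_assoc]
      _ = T * (A⁻¹ * T) := by rw [hSS', hmid]
      _ = T * ((T⁻¹ * T⁻¹) * T) := by rw [hTT']
      _ = (T * T⁻¹) * (T⁻¹ * T) := by simp only [Matrix.mul_assoc]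
      _ = 1 := by
          rw [Matrix.mul_nonsing_inv _ hTdet, Matrix.nonsing_inv_mul _ hTdet, Matrix.one_mul]
  have hM1 : C * B * S⁻¹ = (C * T⁻¹) * U := by
    calc C * B * S⁻¹ = C * (1 * (B * S⁻¹)) := by simp only [Matrix.one_mul, Matrix.mul_assoc]
      _ = C * ((T⁻¹ * T) * (B * S⁻¹)) := by rw [Matrix.nonsing_inv_mul _ hTdet]
      _ = (C * T⁻¹) * U := by simp only [hUdef, Matrix.mul_assoc]
  set M2 := C * T⁻¹ with hM2def
  have hGram : (C * B * S⁻¹)ᴴ * (C * B * S⁻¹) = Uᴴ * (M2ᴴ * M2) * U := by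
    rw [hM1, conjTranspose_mul]
    simp only [Matrix.mul_assoc]
  have hpsd2 : (M2ᴴ * M2).PosSemidef := posSemidef_conjTranspose_mul_self M2
  have hpsdconj : (Uᴴ * (M2ᴴ * M2) * U).PosSemidef := hpsd2.conjTranspose_mul_mul_same U
  rw [nuclearNorm_eq_trace, nuclearNorm_eq_trace,
    trace_sqrt_congr (posSemidef_conjTranspose_mul_self (C * B * S⁻¹)) hpsdconj hGram,
    sqrt_conj hpsd2 hUU hpsdconj, trace_mul_cycle, hUU, Matrix.one_mul]
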